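/- arXiv:1005.5640 — 4 statements merged into one kernel-verified Lean document; each statement's English description precedes it below -/
import Mathlib

section
/- Let M₁,...,Mₜ be matroids with E(Mᵢ) ∩ E(Mⱼ) = {p} for all i ≠ j, p not a loop in any Mᵢ, and M = P(M₁,...,Mₜ;p) their iterated parallel connection at p. A set B not containing p is a basis of M if and only if there is exactly one index i such that B ∩ E(Mᵢ) is a basis of Mᵢ not containing p, and for every j ≠ i, (B ∩ E(Mⱼ)) ∪ {p} is a basis of Mⱼ. -/
open Set

namespace Matroid

variable {α : Type*}

/-- A circuit of a matroid is a minimal dependent set. -/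
def IsCircuit' (M : Matroid α) (C : Set α) : Prop := Minimal M.Dep C

/-- A cocircuit of `M` is a circuit of the dual matroid. -/
def IsCocircuit' (M : Matroid α) (C : Set α) : Prop := M✶.IsCircuit' C

/-- An element is a loop if the singleton is a circuit. -/
def IsLoopElem (M : Matroid α) (e : α) : Prop := M.IsCircuit' {e}

/-- `C` is the fundamental circuit of `e` with respect to the basis `B`:
the unique circuit containing `e` and contained in `B ∪ {e}`. -/
def IsFundCircuit (M : Matroid α) (B : Set α) (e : α) (C : Set α) : Prop :=
  M.IsCircuit' C ∧ e ∈ C ∧ C ⊆ insert e B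

/-- `D` is the fundamental cocircuit of `b` with respect to the basis `B`:
the unique cocircuit containing `b` and contained in `(E(M) \ B) ∪ {b}`. -/
def IsFundCocircuit (M : Matroid α) (B : Set α) (b : α) (D : Set α) : Prop :=
  M.IsCocircuit' D ∧ b ∈ D ∧ D ⊆ insert b (M.E \ B)

/-- Deletion of a single element. -/
def deleteElem (M : Matroid α) (e : α) : Matroid α := M ↾ (M.E \ {e})

/-- Contraction of a single element, defined as the dual of the deletion in the dual. -/
def contractElem (M : Matroid α) (e : α) : Matroid α := (M✶ ↾ (M.E \ {e}))✶

/-- `P` is the parallel connection of `M` and `N` with respect to the basepoint `p`: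
its ground set is `M.E ∪ N.E`, and its circuits are the circuits of `M`, the circuits of
`N`, and sets `(C₁ ∪ C₂) \ {p}` for circuits `C₁` of `M` and `C₂` of `N` both containing `p`. -/
def IsParallelConn (M N : Matroid α) (p : α) (P : Matroid α) : Prop :=
  P.E = M.E ∪ N.E ∧
  ∀ C, P.IsCircuit' C ↔ (M.IsCircuit' C ∨ N.IsCircuit' C ∨
    ∃ C₁ C₂, M.IsCircuit' C₁ ∧ N.IsCircuit' C₂ ∧ p ∈ C₁ ∧ p ∈ C₂ ∧ C = (C₁ ∪ C₂) \ {p})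

/-- `M` is (a copy of) the uniform matroid `U(r,n)`: the ground set has `n` elements and the
independent sets are exactly the subsets of the ground set of cardinality at most `r`. -/
def IsUniform (M : Matroid α) (r n : ℕ) : Prop :=
  M.E.Finite ∧ M.E.ncard = n ∧ ∀ I ⊆ M.E, (M.Indep I ↔ I.ncard ≤ r)

end Matroid

set_option linter.unusedSectionVars false

namespace Matroid

variable {α : Type*} {M N P : Matroid α} {p : α} {B C I J X : Set α}

lemma IsCircuit'.dep (h : M.IsCircuit' C) : M.Dep C := h.prop

lemma IsCircuit'.subset_ground' (h : M.IsCircuit' C) : C ⊆ M.E := h.prop.subset_ground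

lemma exists_circuit_of_dep (hfin : M.E.Finite) (hX : M.Dep X) : ∃ C ⊆ X, M.IsCircuit' C := by
  have hXfin : X.Finite := hfin.subset hX.subset_ground
  obtain ⟨C, hC, hmin⟩ : ∃ C ∈ {D | M.Dep D ∧ D ⊆ X}, ∀ D ∈ {D | M.Dep D ∧ D ⊆ X},
      id D ≤ id C → id C = id D := by
    obtain ⟨C, hC, hmin⟩ := Set.Finite.exists_minimal (s := {D | M.Dep D ∧ D ⊆ X})
      (hXfin.finite_subsets.subset (fun D hD => hD.2)) ⟨X, hX, subset_rfl⟩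
    exact ⟨C, hC, fun D hD hDC => le_antisymm (hmin hD hDC) hDC⟩
  refine ⟨C, hC.2, hC.1, fun D hD hDC => ?_⟩
  have : C = D := hmin D ⟨hD, hDC.trans hC.2⟩ hDC
  exact this.le

lemma indep_iff_no_circuit (hfin : M.E.Finite) (hIE : I ⊆ M.E) :
    M.Indep I ↔ ∀ C, M.IsCircuit' C → ¬ C ⊆ I := by
  constructor
  · intro hI C hC hCI
    exact hC.dep.not_indep (hI.subset hCI)
  · intro h
    by_contra hI
    obtain ⟨C, hCI, hC⟩ := exists_circuit_of_dep hfin ⟨hI, hIE⟩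
    exact h C hC hCI

lemma exists_circuit_insert (hfin : M.E.Finite) (hJ : M.Indep J) (hpE : p ∈ M.E)
    (hdep : ¬ M.Indep (insert p J)) : ∃ C, M.IsCircuit' C ∧ p ∈ C ∧ C ⊆ insert p J := by
  obtain ⟨C, hCsub, hC⟩ := exists_circuit_of_dep hfin ⟨hdep, insert_subset hpE hJ.subset_ground⟩
  refine ⟨C, hC, ?_, hCsub⟩
  by_contra hpC
  refine hC.dep.not_indep (hJ.subset (fun x hx => ?_))
  rcases mem_insert_iff.1 (hCsub hx) with rfl | hmem
  · exact absurd hx hpC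
  · exact hmem

lemma base_of_forall_insert (hI : M.Indep B) (h : ∀ e ∈ M.E, e ∉ B → ¬ M.Indep (insert e B)) :
    M.IsBase B := by
  rw [isBase_iff_maximal_indep]
  refine ⟨hI, fun J hJ hBJ => ?_⟩
  by_contra hJB
  obtain ⟨e, heJ, heB⟩ := not_subset.1 hJB
  exact h e (hJ.subset_ground heJ) heB (hJ.subset (insert_subset heJ hBJ))

lemma exists_insert_of_not_base' (hI : M.Indep I) (hnb : ¬ M.IsBase I) :
    ∃ e ∈ M.E, e ∉ I ∧ M.Indep (insert e I) := by
  have h : ¬ (∀ ⦃J⦄, M.Indep J → I ⊆ J → J ⊆ I) := fun h => hnb (isBase_iff_maximal_indep.2 ⟨hI, h⟩)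
  push_neg at h
  obtain ⟨J, hJ, hIJ, hJI⟩ := h
  obtain ⟨e, heJ, heI⟩ := not_subset.1 hJI
  exact ⟨e, hJ.subset_ground heJ, heI, hJ.subset (insert_subset heJ hIJ)⟩

/-! ### Parallel connection -/

lemma pc_symm (h : IsParallelConn M N p P) : IsParallelConn N M p P := by
  obtain ⟨hE, hC⟩ := h
  refine ⟨by rw [hE, union_comm], fun C => ?_⟩
  rw [hC]
  constructor
  · rintro (h | h | ⟨C₁, C₂, h₁, h₂, hp₁, hp₂, rfl⟩)
    · exact Or.inr (Or.inl h)
    · exact Or.inl h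
    · exact Or.inr (Or.inr ⟨C₂, C₁, h₂, h₁, hp₂, hp₁, by rw [union_comm]⟩)
  · rintro (h | h | ⟨C₁, C₂, h₁, h₂, hp₁, hp₂, rfl⟩)
    · exact Or.inr (Or.inl h)
    · exact Or.inl h
    · exact Or.inr (Or.inr ⟨C₂, C₁, h₂, h₁, hp₂, hp₁, by rw [union_comm]⟩)

lemma pc_indep_iff (hpc : IsParallelConn M N p P) (hMfin : M.E.Finite) (hNfin : N.E.Finite)
    (hpM : p ∈ M.E) (hpN : p ∈ N.E) (hI : I ⊆ P.E) :
    P.Indep I ↔ M.Indep (I ∩ M.E) ∧ N.Indep (I ∩ N.E) ∧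
      (M.Indep (insert p (I ∩ M.E)) ∨ N.Indep (insert p (I ∩ N.E))) := by
  obtain ⟨hE, hC⟩ := hpc
  have hPfin : P.E.Finite := by rw [hE]; exact hMfin.union hNfin
  rw [indep_iff_no_circuit hPfin hI]
  constructor
  · intro h
    have hM : M.Indep (I ∩ M.E) := by
      rw [indep_iff_no_circuit hMfin inter_subset_right]
      intro C hCc hCI
      exact h C ((hC C).2 (Or.inl hCc)) (hCI.trans inter_subset_left)
    have hN : N.Indep (I ∩ N.E) := by
      rw [indep_iff_no_circuit hNfin inter_subset_right]
      intro C hCc hCI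
      exact h C ((hC C).2 (Or.inr (Or.inl hCc))) (hCI.trans inter_subset_left)
    refine ⟨hM, hN, ?_⟩
    by_cases hpI : p ∈ I
    · left
      rwa [insert_eq_self.2 (mem_inter hpI hpM)]
    · by_contra hcon
      push_neg at hcon
      obtain ⟨hdM, hdN⟩ := hcon
      obtain ⟨C₁, hC₁, hpC₁, hC₁s⟩ := exists_circuit_insert hMfin hM hpM hdM
      obtain ⟨C₂, hC₂, hpC₂, hC₂s⟩ := exists_circuit_insert hNfin hN hpN hdN
      refine h ((C₁ ∪ C₂) \ {p})
        ((hC _).2 (Or.inr (Or.inr ⟨C₁, C₂, hC₁, hC₂, hpC₁, hpC₂, rfl⟩))) ?_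
      rintro x ⟨hx, hxp⟩
      simp only [mem_singleton_iff] at hxp
      rcases hx with h1 | h2
      · rcases mem_insert_iff.1 (hC₁s h1) with rfl | hmem
        · exact absurd rfl hxp
        · exact hmem.1
      · rcases mem_insert_iff.1 (hC₂s h2) with rfl | hmem
        · exact absurd rfl hxp
        · exact hmem.1
  · rintro ⟨hM, hN, hins⟩ C hCc hCI
    rcases (hC C).1 hCc with h1 | h2 | ⟨C₁, C₂, hC₁, hC₂, hp₁, hp₂, rfl⟩
    · exact ((indep_iff_no_circuit hMfin inter_subset_right).1 hM) C h1
        (subset_inter hCI h1.subset_ground')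
    · exact ((indep_iff_no_circuit hNfin inter_subset_right).1 hN) C h2
        (subset_inter hCI h2.subset_ground')
    · have hs₁ : C₁ ⊆ insert p (I ∩ M.E) := by
        intro x hx
        by_cases hxp : x = p
        · exact hxp ▸ mem_insert _ _
        · exact mem_insert_of_mem _
            ⟨hCI ⟨Or.inl hx, by simpa using hxp⟩, hC₁.subset_ground' hx⟩
      have hs₂ : C₂ ⊆ insert p (I ∩ N.E) := by
        intro x hx
        by_cases hxp : x = p
        · exact hxp ▸ mem_insert _ _
        · exact mem_insert_of_mem _
            ⟨hCI ⟨Or.inr hx, by simpa using hxp⟩, hC₂.subset_ground' hx⟩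
      rcases hins with hiM | hiN
      · exact hC₁.dep.not_indep (hiM.subset hs₁)
      · exact hC₂.dep.not_indep (hiN.subset hs₂)

lemma pc_indep_left (hpc : IsParallelConn M N p P) (hMfin : M.E.Finite) (hNfin : N.E.Finite)
    (hpM : p ∈ M.E) (hpN : p ∈ N.E) (hI : P.Indep I) : M.Indep (I ∩ M.E) :=
  ((pc_indep_iff hpc hMfin hNfin hpM hpN hI.subset_ground).1 hI).1

lemma pc_indep_right (hpc : IsParallelConn M N p P) (hMfin : M.E.Finite) (hNfin : N.E.Finite)
    (hpM : p ∈ M.E) (hpN : p ∈ N.E) (hI : P.Indep I) : N.Indep (I ∩ N.E) :=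
  ((pc_indep_iff hpc hMfin hNfin hpM hpN hI.subset_ground).1 hI).2.1


section Base

variable (hpc : IsParallelConn M N p P) (hMN : M.E ∩ N.E = {p})
  (hMfin : M.E.Finite) (hNfin : N.E.Finite) (hpM : p ∈ M.E) (hpN : p ∈ N.E)

include hpc hMN hMfin hNfin hpM hpN

lemma pc_base_mem_to (hpB : p ∈ B) (hPB : P.IsBase B) : M.IsBase (B ∩ M.E) := by
  have hM := pc_indep_left hpc hMfin hNfin hpM hpN hPB.indep
  by_contra hnb
  obtain ⟨e, heM, heBM, hins⟩ := exists_insert_of_not_base' hM hnb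
  have heB : e ∉ B := fun h => heBM ⟨h, heM⟩
  have hep : e ≠ p := fun h => heB (h ▸ hpB)
  have heN : e ∉ N.E := fun h => hep (mem_singleton_iff.1 (hMN ▸ (mem_inter heM h)))
  have hPind : P.Indep (insert e B) := by
    rw [pc_indep_iff hpc hMfin hNfin hpM hpN
      (insert_subset (hpc.1 ▸ Or.inl heM) hPB.subset_ground),
      insert_inter_of_mem heM, insert_inter_of_notMem heN]
    refine ⟨hins, pc_indep_right hpc hMfin hNfin hpM hpN hPB.indep, Or.inl ?_⟩
    rwa [insert_eq_self.2 (mem_insert_of_mem _ (mem_inter hpB hpM))]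
  have hEq := hPB.eq_of_subset_indep hPind (subset_insert _ _)
  exact heB (by rw [hEq]; exact mem_insert _ _)

lemma pc_base_mem_of (hpB : p ∈ B) (hB : B ⊆ P.E) (hMB : M.IsBase (B ∩ M.E))
    (hNB : N.IsBase (B ∩ N.E)) : P.IsBase B := by
  have hind : P.Indep B := by
    rw [pc_indep_iff hpc hMfin hNfin hpM hpN hB]
    exact ⟨hMB.indep, hNB.indep,
      Or.inl (by rw [insert_eq_self.2 (mem_inter hpB hpM)]; exact hMB.indep)⟩
  refine base_of_forall_insert hind ?_
  intro e heE heB hins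
  have hME : e ∈ M.E ∪ N.E := by rw [← hpc.1]; exact heE
  rcases hME with heM | heN
  · have h1 := pc_indep_left hpc hMfin hNfin hpM hpN hins
    rw [insert_inter_of_mem heM] at h1
    exact (hMB.insert_dep ⟨heM, fun h => heB h.1⟩).not_indep h1
  · have h1 := pc_indep_right hpc hMfin hNfin hpM hpN hins
    rw [insert_inter_of_mem heN] at h1
    exact (hNB.insert_dep ⟨heN, fun h => heB h.1⟩).not_indep h1

lemma pc_base_mem (hpB : p ∈ B) (hB : B ⊆ P.E) :
    P.IsBase B ↔ M.IsBase (B ∩ M.E) ∧ N.IsBase (B ∩ N.E) := by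
  constructor
  · intro hPB
    exact ⟨pc_base_mem_to hpc hMN hMfin hNfin hpM hpN hpB hPB,
      pc_base_mem_to (pc_symm hpc) (by rw [inter_comm]; exact hMN) hNfin hMfin hpN hpM hpB hPB⟩
  · rintro ⟨h1, h2⟩
    exact pc_base_mem_of hpc hMN hMfin hNfin hpM hpN hpB hB h1 h2

lemma pc_base_not_mem_of (hpB : p ∉ B) (hB : B ⊆ P.E) (hMB : M.IsBase (B ∩ M.E))
    (hNB : N.IsBase (insert p (B ∩ N.E))) : P.IsBase B := by
  have hind : P.Indep B := by
    rw [pc_indep_iff hpc hMfin hNfin hpM hpN hB]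
    exact ⟨hMB.indep, hNB.indep.subset (subset_insert _ _), Or.inr hNB.indep⟩
  refine base_of_forall_insert hind ?_
  intro e heE heB hins
  have h1 := pc_indep_left hpc hMfin hNfin hpM hpN hins
  have h3 := ((pc_indep_iff hpc hMfin hNfin hpM hpN hins.subset_ground).1 hins).2.2
  by_cases hep : e = p
  · subst hep
    rw [insert_inter_of_mem hpM] at h1
    exact (hMB.insert_dep ⟨hpM, fun h => hpB h.1⟩).not_indep h1
  · have hME : e ∈ M.E ∪ N.E := by rw [← hpc.1]; exact heE
    rcases hME with heM | heN
    · rw [insert_inter_of_mem heM] at h1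
      exact (hMB.insert_dep ⟨heM, fun h => heB h.1⟩).not_indep h1
    · have heM : e ∉ M.E := fun h => hep (mem_singleton_iff.1 (hMN ▸ (mem_inter h heN)))
      rcases h3 with h3 | h3
      · rw [insert_inter_of_notMem heM] at h3
        exact (hMB.insert_dep ⟨hpM, fun h => hpB h.1⟩).not_indep h3
      · rw [insert_inter_of_mem heN, Set.insert_comm] at h3
        refine (hNB.insert_dep ⟨heN, fun h => ?_⟩).not_indep h3
        rcases mem_insert_iff.1 h with h | h
        · exact hep h
        · exact heB h.1

lemma pc_base_not_mem_to (hpB : p ∉ B) (hPB : P.IsBase B)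
    (hNins : N.Indep (insert p (B ∩ N.E))) :
    M.IsBase (B ∩ M.E) ∧ N.IsBase (insert p (B ∩ N.E)) := by
  have hM := pc_indep_left hpc hMfin hNfin hpM hpN hPB.indep
  have hN := pc_indep_right hpc hMfin hNfin hpM hpN hPB.indep
  constructor
  · by_contra hnb
    obtain ⟨e, heM, heBM, hins⟩ := exists_insert_of_not_base' hM hnb
    by_cases hep : e = p
    · rw [hep] at hins
      have hPind : P.Indep (insert p B) := by
        rw [pc_indep_iff hpc hMfin hNfin hpM hpN
          (insert_subset (hpc.1 ▸ Or.inl hpM) hPB.subset_ground),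
          insert_inter_of_mem hpM, insert_inter_of_mem hpN]
        exact ⟨hins, hNins, Or.inl (by rw [insert_eq_self.2 (mem_insert _ _)]; exact hins)⟩
      have hEq := hPB.eq_of_subset_indep hPind (subset_insert _ _)
      exact hpB (by rw [hEq]; exact mem_insert _ _)
    · have heN : e ∉ N.E := fun h => hep (mem_singleton_iff.1 (hMN ▸ (mem_inter heM h)))
      have heB : e ∉ B := fun h => heBM ⟨h, heM⟩
      have hPind : P.Indep (insert e B) := by
        rw [pc_indep_iff hpc hMfin hNfin hpM hpN
          (insert_subset (hpc.1 ▸ Or.inl heM) hPB.subset_ground),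
          insert_inter_of_mem heM, insert_inter_of_notMem heN]
        exact ⟨hins, hN, Or.inr hNins⟩
      have hEq := hPB.eq_of_subset_indep hPind (subset_insert _ _)
      exact heB (by rw [hEq]; exact mem_insert _ _)
  · by_contra hnb
    obtain ⟨e, heN, heBN, hins⟩ := exists_insert_of_not_base' hNins hnb
    have hep : e ≠ p := fun h => heBN (h ▸ mem_insert _ _)
    have heM : e ∉ M.E := fun h => hep (mem_singleton_iff.1 (hMN ▸ (mem_inter h heN)))
    have heB : e ∉ B := fun h => heBN (mem_insert_of_mem _ (mem_inter h heN))
    have hPind : P.Indep (insert e B) := by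
      rw [pc_indep_iff hpc hMfin hNfin hpM hpN
        (insert_subset (hpc.1 ▸ Or.inr heN) hPB.subset_ground),
        insert_inter_of_notMem heM, insert_inter_of_mem heN]
      refine ⟨hM, hins.subset (insert_subset_insert (subset_insert _ _)), Or.inr ?_⟩
      rwa [Set.insert_comm]
    have hEq := hPB.eq_of_subset_indep hPind (subset_insert _ _)
    exact heB (by rw [hEq]; exact mem_insert _ _)

lemma pc_base_not_mem (hpB : p ∉ B) (hB : B ⊆ P.E) :
    P.IsBase B ↔ (M.IsBase (B ∩ M.E) ∧ N.IsBase (insert p (B ∩ N.E))) ∨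
      (M.IsBase (insert p (B ∩ M.E)) ∧ N.IsBase (B ∩ N.E)) := by
  constructor
  · intro hPB
    have h3 := ((pc_indep_iff hpc hMfin hNfin hpM hpN hPB.subset_ground).1 hPB.indep).2.2
    rcases h3 with h3 | h3
    · right
      have := pc_base_not_mem_to (pc_symm hpc) (by rw [inter_comm]; exact hMN)
        hNfin hMfin hpN hpM hpB hPB h3
      exact ⟨this.2, this.1⟩
    · left
      exact pc_base_not_mem_to hpc hMN hMfin hNfin hpM hpN hpB hPB h3
  · rintro (⟨h1, h2⟩ | ⟨h1, h2⟩)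
    · exact pc_base_not_mem_of hpc hMN hMfin hNfin hpM hpN hpB hB h1 h2
    · exact pc_base_not_mem_of (pc_symm hpc) (by rw [inter_comm]; exact hMN)
        hNfin hMfin hpN hpM hpB hB h2 h1

end Base

end Matroid

open Matroid in
/-- bases of an iterated parallel connection not containing the basepoint. -/
theorem base_iterated_parallelConn_not_mem_basepoint {α : Type*} (t : ℕ) (ht : 1 ≤ t)
    (M : ℕ → Matroid α) (P : ℕ → Matroid α) (p : α)
    (hfin : ∀ i < t, (M i).Finite)
    (hground : ∀ i < t, ∀ j < t, i ≠ j → (M i).E ∩ (M j).E = {p})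
    (hp : ∀ i < t, p ∈ (M i).E ∧ ¬ (M i).IsLoopElem p)
    (hP0 : P 0 = M 0)
    (hPsucc : ∀ i, i + 1 < t → IsParallelConn (P i) (M (i + 1)) p (P (i + 1)))
    (B : Set α) (hBsub : B ⊆ ⋃ i ∈ Finset.range t, (M i).E) (hpB : p ∉ B) :
    (P (t - 1)).IsBase B ↔
      ∃! i, i < t ∧ (M i).IsBase (B ∩ (M i).E) ∧ p ∉ B ∩ (M i).E ∧
        ∀ j < t, j ≠ i → (M j).IsBase (insert p (B ∩ (M j).E)) := by
  -- ground set of the iterated parallel connection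
  have aux : ∀ k, k < t → (P k).E = ⋃ i ∈ Finset.range (k + 1), (M i).E := by
    intro k
    induction k with
    | zero => intro _; simp [hP0, Finset.range_one]
    | succ n ih =>
      intro h
      rw [(hPsucc n h).1, ih (by omega)]
      ext x
      simp only [Set.mem_union, Set.mem_iUnion, Finset.mem_range]
      constructor
      · rintro (⟨i, hi, hx⟩ | hx)
        · exact ⟨i, by omega, hx⟩
        · exact ⟨n + 1, by omega, hx⟩
      · rintro ⟨i, hi, hx⟩
        rcases Nat.lt_or_ge i (n + 1) with h' | h'
        · exact Or.inl ⟨i, h', hx⟩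
        · obtain rfl : i = n + 1 := by omega
          exact Or.inr hx
  have auxfin : ∀ k, k < t → (P k).E.Finite := by
    intro k
    induction k with
    | zero => intro h; rw [hP0]; exact (hfin 0 h).ground_finite
    | succ n ih =>
      intro h
      rw [(hPsucc n h).1]
      exact (ih (by omega)).union (hfin (n + 1) h).ground_finite
  have auxsub : ∀ k, k < t → ∀ i ≤ k, (M i).E ⊆ (P k).E := by
    intro k hk i hik
    rw [aux k hk]
    intro x hx
    simp only [Set.mem_iUnion, Finset.mem_range]
    exact ⟨i, by omega, hx⟩
  have auxp : ∀ k, k < t → p ∈ (P k).E := fun k hk =>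
    auxsub k hk 0 (Nat.zero_le _) (hp 0 (by omega)).1
  have auxInt : ∀ k, k + 1 < t → (P k).E ∩ (M (k + 1)).E = {p} := by
    intro k hk
    apply subset_antisymm
    · rintro x ⟨hx1, hx2⟩
      rw [aux k (by omega)] at hx1
      simp only [Set.mem_iUnion, Finset.mem_range] at hx1
      obtain ⟨i, hik, hxi⟩ := hx1
      exact (hground i (by omega) (k + 1) hk (by omega)) ▸ Set.mem_inter hxi hx2
    · intro x hx
      rw [Set.mem_singleton_iff] at hx
      subst hx
      exact Set.mem_inter (auxp k (by omega)) (hp (k + 1) hk).1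
  -- bases containing the basepoint
  have aux3 : ∀ k, k < t → ∀ B', B' ⊆ (P k).E → p ∈ B' →
      ((P k).IsBase B' ↔ ∀ i ≤ k, (M i).IsBase (B' ∩ (M i).E)) := by
    intro k
    induction k with
    | zero =>
      intro h B' hB' hpB'
      rw [hP0] at hB' ⊢
      constructor
      · intro hb i hi
        obtain rfl : i = 0 := Nat.le_zero.1 hi
        rwa [Set.inter_eq_self_of_subset_left hB']
      · intro h'
        have := h' 0 le_rfl
        rwa [Set.inter_eq_self_of_subset_left hB'] at this
    | succ n ih =>
      intro h B' hB' hpB'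
      have hn : n < t := by omega
      have hre : ∀ i ≤ n, (B' ∩ (P n).E) ∩ (M i).E = B' ∩ (M i).E := fun i hi => by
        rw [Set.inter_assoc, Set.inter_eq_self_of_subset_right (auxsub n hn i hi)]
      rw [pc_base_mem (hPsucc n h) (auxInt n h) (auxfin n hn) (hfin (n + 1) h).ground_finite
          (auxp n hn) (hp (n + 1) h).1 hpB' hB',
        ih hn (B' ∩ (P n).E) Set.inter_subset_right (Set.mem_inter hpB' (auxp n hn))]
      constructor
      · rintro ⟨h1, h2⟩ i hi
        rcases Nat.lt_or_ge i (n + 1) with hi' | hi'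
        · have := h1 i (by omega)
          rwa [hre i (by omega)] at this
        · obtain rfl : i = n + 1 := by omega
          exact h2
      · intro h'
        refine ⟨fun i hi => ?_, h' (n + 1) le_rfl⟩
        rw [hre i hi]
        exact h' i (by omega)
  -- bases not containing the basepoint
  have aux4 : ∀ k, k < t → ∀ B', B' ⊆ (P k).E → p ∉ B' →
      ((P k).IsBase B' ↔ ∃ i ≤ k, (M i).IsBase (B' ∩ (M i).E) ∧
        ∀ j ≤ k, j ≠ i → (M j).IsBase (insert p (B' ∩ (M j).E))) := by
    intro k
    induction k with
    | zero =>
      intro h B' hB' hpB'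
      rw [hP0] at hB' ⊢
      constructor
      · intro hb
        exact ⟨0, le_rfl, by rwa [Set.inter_eq_self_of_subset_left hB'],
          fun j hj hj0 => absurd (Nat.le_zero.1 hj) hj0⟩
      · rintro ⟨i, hi, hbase, -⟩
        obtain rfl : i = 0 := Nat.le_zero.1 hi
        rwa [Set.inter_eq_self_of_subset_left hB'] at hbase
    | succ n ih =>
      intro h B' hB' hpB'
      have hn : n < t := by omega
      have hre : ∀ i ≤ n, (B' ∩ (P n).E) ∩ (M i).E = B' ∩ (M i).E := fun i hi => by
        rw [Set.inter_assoc, Set.inter_eq_self_of_subset_right (auxsub n hn i hi)]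
      have hpB'n : p ∉ B' ∩ (P n).E := fun hc => hpB' hc.1
      rw [pc_base_not_mem (hPsucc n h) (auxInt n h) (auxfin n hn)
          (hfin (n + 1) h).ground_finite (auxp n hn) (hp (n + 1) h).1 hpB' hB']
      constructor
      · rintro (⟨h1, h2⟩ | ⟨h1, h2⟩)
        · obtain ⟨i, hi, hbase, hrest⟩ :=
            (ih hn (B' ∩ (P n).E) Set.inter_subset_right hpB'n).1 h1
          refine ⟨i, by omega, by rwa [hre i hi] at hbase, fun j hj hji => ?_⟩
          rcases Nat.lt_or_ge j (n + 1) with hj' | hj'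
          · have := hrest j (by omega) hji
            rwa [hre j (by omega)] at this
          · obtain rfl : j = n + 1 := by omega
            exact h2
        · have hall := (aux3 n hn (insert p (B' ∩ (P n).E))
            (Set.insert_subset (auxp n hn) Set.inter_subset_right) (Set.mem_insert _ _)).1 h1
          refine ⟨n + 1, le_rfl, h2, fun j hj hji => ?_⟩
          have hjn : j ≤ n := by omega
          have := hall j hjn
          rwa [Set.insert_inter_of_mem (hp j (by omega)).1, hre j hjn] at this
      · rintro ⟨i, hi, hbase, hrest⟩
        rcases Nat.lt_or_ge i (n + 1) with hi' | hi'
        · left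
          refine ⟨(ih hn (B' ∩ (P n).E) Set.inter_subset_right hpB'n).2
            ⟨i, by omega, by rwa [hre i (by omega)], fun j hj hji => ?_⟩,
            hrest (n + 1) le_rfl (by omega)⟩
          rw [hre j hj]
          exact hrest j (by omega) hji
        · obtain rfl : i = n + 1 := by omega
          right
          refine ⟨(aux3 n hn (insert p (B' ∩ (P n).E))
            (Set.insert_subset (auxp n hn) Set.inter_subset_right) (Set.mem_insert _ _)).2
            (fun j hj => ?_), hbase⟩
          rw [Set.insert_inter_of_mem (hp j (by omega)).1, hre j hj]
          exact hrest j (by omega) (by omega)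
  -- conclusion
  have hk : t - 1 < t := by omega
  have hBsub' : B ⊆ (P (t - 1)).E := by
    rw [aux (t - 1) hk]
    intro x hx
    have := hBsub hx
    simp only [Set.mem_iUnion, Finset.mem_range] at this ⊢
    obtain ⟨i, hi, hxi⟩ := this
    exact ⟨i, by omega, hxi⟩
  rw [aux4 (t - 1) hk B hBsub' hpB]
  constructor
  · rintro ⟨i, hi, hbase, hrest⟩
    refine ⟨i, ⟨by omega, hbase, fun hc => hpB hc.1, fun j hj hji => hrest j (by omega) hji⟩, ?_⟩
    rintro i' ⟨hi', hbase', -, hrest'⟩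
    by_contra hne
    have h1 := hrest i' (by omega) hne
    have hEq := hbase'.eq_of_subset_isBase h1 (Set.subset_insert _ _)
    have hpA : p ∈ B ∩ (M i').E := by rw [hEq]; exact Set.mem_insert _ _
    exact hpB hpA.1
  · rintro ⟨i, ⟨hi, hbase, -, hrest⟩, -⟩
    exact ⟨i, by omega, hbase, fun j hj hji => hrest j (by omega) hji⟩
end

section
/- Let M₁, M₂, M₃ be matroids with E(Mᵢ) ∩ E(Mⱼ) = {p} for all i ≠ j, and suppose p is not a loop in any Mᵢ. Then parallel connection at p is associative: P(M₁, P(M₂,M₃;p); p) = P(P(M₁,M₂;p), M₃; p). -/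
open Set

namespace Matroid

variable {α : Type*}

/-- Every dependent set in a matroid with finite ground set contains a circuit. -/
theorem Dep.exists_isCircuit_subset' {M : Matroid α} {D : Set α} (hD : M.Dep D)
    (hE : M.E.Finite) : ∃ C ⊆ D, M.IsCircuit' C := by
  set s : Set (Set α) := {C | C ⊆ D ∧ M.Dep C} with hs
  have hfin : s.Finite := (hE.subset hD.subset_ground).finite_subsets.subset fun C hC => hC.1
  obtain ⟨C, hCs, hmin⟩ := Set.Finite.exists_minimalFor id s hfin ⟨D, Subset.rfl, hD⟩
  refine ⟨C, hCs.1, hCs.2, fun C' hC' hle => ?_⟩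
  have := hmin (j := C') ⟨hle.trans hCs.1, hC'⟩ hle
  simp only [id] at this
  exact this

theorem indep_iff_forall_isCircuit {M : Matroid α} {I : Set α} (hE : M.E.Finite)
    (hIE : I ⊆ M.E) : M.Indep I ↔ ∀ C ⊆ I, ¬ M.IsCircuit' C := by
  constructor
  · intro hI C hCI hC
    exact hC.prop.1 (hI.subset hCI)
  · intro h
    by_contra hI
    obtain ⟨C, hCI, hC⟩ := Dep.exists_isCircuit_subset' ⟨hI, hIE⟩ hE
    exact h C hCI hC

end Matroid

open Matroid in
/-- parallel connection at a common basepoint is associative. -/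
theorem parallelConn_assoc {α : Type*} (M₁ M₂ M₃ Q₁ Q₂ R₁ R₂ : Matroid α) (p : α)
    [M₁.Finite] [M₂.Finite] [M₃.Finite]
    (h12 : M₁.E ∩ M₂.E = {p}) (h13 : M₁.E ∩ M₃.E = {p}) (h23 : M₂.E ∩ M₃.E = {p})
    (hp1 : ¬ M₁.IsLoopElem p) (hp2 : ¬ M₂.IsLoopElem p) (hp3 : ¬ M₃.IsLoopElem p)
    (hQ₁ : Matroid.IsParallelConn M₂ M₃ p Q₁) (hQ₂ : Matroid.IsParallelConn M₁ Q₁ p Q₂)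
    (hR₁ : Matroid.IsParallelConn M₁ M₂ p R₁) (hR₂ : Matroid.IsParallelConn R₁ M₃ p R₂) :
    Q₂ = R₂ := by
  have hnp : ∀ (A B : Set α), p ∉ (A ∪ B) \ {p} := by simp
  have hcirc : ∀ C, Q₂.IsCircuit' C ↔ R₂.IsCircuit' C := by
    intro C
    rw [hQ₂.2, hR₂.2]
    constructor
    · rintro (h1 | hQ | ⟨C₁, CQ, hC₁, hCQ, hp₁, hpQ, rfl⟩)
      · exact Or.inl ((hR₁.2 C).mpr (Or.inl h1))
      · rcases (hQ₁.2 C).mp hQ with h2 | h3 | ⟨C₂, C₃, hC₂, hC₃, hp₂, hp₃, rfl⟩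
        · exact Or.inl ((hR₁.2 C).mpr (Or.inr (Or.inl h2)))
        · exact Or.inr (Or.inl h3)
        · exact Or.inr (Or.inr ⟨C₂, C₃, (hR₁.2 C₂).mpr (Or.inr (Or.inl hC₂)), hC₃, hp₂, hp₃,
            rfl⟩)
      · rcases (hQ₁.2 CQ).mp hCQ with h2 | h3 | ⟨C₂, C₃, _, _, _, _, rfl⟩
        · exact Or.inl ((hR₁.2 _).mpr (Or.inr (Or.inr ⟨C₁, CQ, hC₁, h2, hp₁, hpQ, rfl⟩)))
        · exact Or.inr (Or.inr ⟨C₁, CQ, (hR₁.2 C₁).mpr (Or.inl hC₁), h3, hp₁, hpQ, rfl⟩)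
        · exact absurd hpQ (hnp _ _)
    · rintro (hR | h3 | ⟨CR, C₃, hCR, hC₃, hpR, hp₃, rfl⟩)
      · rcases (hR₁.2 C).mp hR with h1 | h2 | ⟨C₁, C₂, hC₁, hC₂, hp₁, hp₂, rfl⟩
        · exact Or.inl h1
        · exact Or.inr (Or.inl ((hQ₁.2 C).mpr (Or.inl h2)))
        · exact Or.inr (Or.inr ⟨C₁, C₂, hC₁, (hQ₁.2 C₂).mpr (Or.inl hC₂), hp₁, hp₂, rfl⟩)
      · exact Or.inr (Or.inl ((hQ₁.2 C).mpr (Or.inr (Or.inl h3))))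
      · rcases (hR₁.2 CR).mp hCR with h1 | h2 | ⟨C₁, C₂, _, _, _, _, rfl⟩
        · exact Or.inr (Or.inr ⟨CR, C₃, h1, (hQ₁.2 C₃).mpr (Or.inr (Or.inl hC₃)), hpR, hp₃,
            rfl⟩)
        · exact Or.inr (Or.inl ((hQ₁.2 _).mpr
            (Or.inr (Or.inr ⟨CR, C₃, h2, hC₃, hpR, hp₃, rfl⟩))))
        · exact absurd hpR (hnp _ _)
  have hE : Q₂.E = R₂.E := by
    rw [hQ₂.1, hQ₁.1, hR₂.1, hR₁.1, union_assoc]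
  have hQfin : Q₂.E.Finite := by
    rw [hQ₂.1, hQ₁.1]
    exact M₁.ground_finite.union (M₂.ground_finite.union M₃.ground_finite)
  have hRfin : R₂.E.Finite := hE ▸ hQfin
  refine Matroid.ext_indep hE fun I hI => ?_
  rw [Matroid.indep_iff_forall_isCircuit hQfin hI,
    Matroid.indep_iff_forall_isCircuit hRfin (hI.trans_eq hE)]
  exact forall_congr' fun C => imp_congr_right fun _ => not_congr (hcirc C)
end

section
/- Let M be a matroid whose ground set has a linear order, and let Δ_BC(M) be its broken circuit complex. Then Δ_BC(M) is a pure simplicial complex of the same dimension as the independence complex of M, and every facet of Δ_BC(M) is a basis of M. -/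
open Set

open Matroid in
/-- A face of the broken circuit complex: a subset of the ground set containing no
broken circuit `C \ {min C}`. -/
def Matroid.InBCComplex {α : Type*} [LinearOrder α] (M : Matroid α) (F : Set α) : Prop :=
  F ⊆ M.E ∧ ∀ C, M.IsCircuit' C → ∀ m, IsLeast C m → ¬ (C \ {m} ⊆ F)


open Matroid in
private lemma exists_isCircuit_subset' {α : Type*} (M : Matroid α) [M.Finite] :
    ∀ n (D : Set α), D.ncard = n → M.Dep D → ∃ C, C ⊆ D ∧ M.IsCircuit' C := by
  intro n
  induction n using Nat.strong_induction_on with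
  | _ n ih =>
    intro D hcard hD
    by_cases h : Minimal M.Dep D
    · exact ⟨D, Set.Subset.rfl, h⟩
    · rw [Minimal] at h
      push_neg at h
      obtain ⟨D', hD', hsub, hns⟩ := h hD
      have hss : D' ⊂ D := HasSubset.Subset.ssubset_of_ne hsub (fun h' => hns (h' ▸ Set.Subset.rfl))
      have hfin : D.Finite := M.ground_finite.subset hD.subset_ground
      obtain ⟨C, hCD, hC⟩ := ih D'.ncard (hcard ▸ Set.ncard_lt_ncard hss hfin) D' rfl hD'
      exact ⟨C, hCD.trans hsub, hC⟩

open Matroid in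
private lemma exists_isCircuit_subset {α : Type*} {M : Matroid α} [M.Finite] {D : Set α}
    (hD : M.Dep D) : ∃ C, C ⊆ D ∧ M.IsCircuit' C :=
  exists_isCircuit_subset' M D.ncard D rfl hD

open Matroid in
private lemma Matroid.IsCircuit'.diff_singleton_indep {α : Type*} {M : Matroid α} {C : Set α}
    (hC : M.IsCircuit' C) {x : α} (hx : x ∈ C) : M.Indep (C \ {x}) := by
  rw [← Matroid.not_dep_iff (Set.diff_subset.trans hC.1.subset_ground)]
  intro hdep
  have := hC.2 hdep Set.diff_subset
  exact (this hx).2 rfl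

open Matroid in
private lemma Matroid.IsCircuit'.mem_closure_diff_singleton {α : Type*} {M : Matroid α} {C : Set α}
    (hC : M.IsCircuit' C) {x : α} (hx : x ∈ C) : x ∈ M.closure (C \ {x}) := by
  rw [(hC.diff_singleton_indep hx).mem_closure_iff]
  left
  rw [Set.insert_diff_singleton, Set.insert_eq_of_mem hx]
  exact hC.1

open Matroid in
/-- the broken circuit complex is pure of the same dimension as the
independence complex; its facets (maximal faces) are bases of `M`. -/
theorem bcComplex_facets_are_bases {α : Type*} [LinearOrder α] [WellFoundedLT α]
    (M : Matroid α) [M.Finite] :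
    (∀ F, Maximal (M.InBCComplex) F → M.IsBase F) ∧
    (∀ F G, Maximal (M.InBCComplex) F → Maximal (M.InBCComplex) G → F.ncard = G.ncard) := by
  have key : ∀ F, Maximal M.InBCComplex F → M.IsBase F := by
    intro F hF
    obtain ⟨⟨hFE, hBC⟩, hmax⟩ := hF
    have hindep : M.Indep F := by
      rw [← Matroid.not_dep_iff hFE]
      intro hdep
      obtain ⟨C, hCF, hC⟩ := exists_isCircuit_subset hdep
      obtain ⟨m, hmC, hmin⟩ := wellFounded_lt.has_min C hC.1.nonempty
      exact hBC C hC m ⟨hmC, fun x hx => not_lt.mp (hmin x hx)⟩ (Set.diff_subset.trans hCF)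
    have hsp : M.Spanning F := by
      by_contra hns
      have hne : (M.E \ M.closure F).Nonempty := by
        rw [Set.diff_nonempty]
        intro hsub
        exact hns ⟨(M.closure_subset_ground F).antisymm hsub, hFE⟩
      obtain ⟨e, heE, hemin⟩ := wellFounded_lt.has_min _ hne
      have heF : e ∉ F := fun h => heE.2 (M.subset_closure F hFE h)
      have hindep' : M.Indep (insert e F) := by
        rw [← Matroid.not_dep_iff (Set.insert_subset heE.1 hFE)]
        intro hdep
        exact heE.2 (hindep.mem_closure_iff.mpr (Or.inl hdep))
      have hins : M.InBCComplex (insert e F) := by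
        refine ⟨Set.insert_subset heE.1 hFE, ?_⟩
        intro C hC m hleast hsub
        have heC : e ∈ C \ {m} := by
          by_contra h
          refine hBC C hC m hleast fun x hx => ?_
          rcases hsub hx with h' | h'
          · exact absurd (h' ▸ hx) h
          · exact h'
        have hmC : m ∈ C := hleast.1
        have hmlt : m < e := lt_of_le_of_ne (hleast.2 heC.1) (fun h => heC.2 h.symm)
        have hmnotin : m ∉ insert e F := by
          intro hm
          have hCsub : C ⊆ insert e F := by
            intro x hx
            by_cases hxm : x = m
            · exact hxm ▸ hm
            · exact hsub ⟨hx, hxm⟩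
          exact (hindep'.subset hCsub).not_dep hC.1
        have h1 : m ∈ M.closure (insert e F) :=
          M.closure_subset_closure hsub (hC.mem_closure_diff_singleton hmC)
        have h2 : m ∉ M.closure F := by
          intro hm
          have hCe : C \ {e} ⊆ M.closure F := by
            intro x hx
            by_cases hxm : x = m
            · exact hxm ▸ hm
            · rcases hsub ⟨hx.1, hxm⟩ with h' | h'
              · exact absurd h' hx.2
              · exact M.subset_closure F hFE h'
          have h3 : e ∈ M.closure F :=
            M.closure_subset_closure_of_subset_closure hCe
              (hC.mem_closure_diff_singleton heC.1)
          exact heE.2 h3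
        exact hemin m ⟨hC.1.subset_ground hmC, h2⟩ hmlt
      exact heF (hmax hins (Set.subset_insert e F) (Set.mem_insert e F))
    exact hindep.isBase_of_spanning hsp
  exact ⟨key, fun F G hF hG => (key F hF).ncard_eq_ncard_of_isBase (key G hG)⟩
end

section
/- Let M be a matroid, B a basis, and {e,f} a cocircuit of M with e ∈ B and f ∉ B. If e_j ∈ B \ {e}, then the fundamental cocircuit of e_j with respect to the basis B' = (B \ {e}) ∪ {f} in the deletion M \ e satisfies: either it equals the fundamental cocircuit coc(B, e_j) of M, or its union with {e} is a cocircuit of M. -/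
open Set

open Matroid in
/-- for a cocircuit `{e,f}` with `e ∈ B`, `f ∉ B`, and `e_j ∈ B \ {e}`,
the fundamental cocircuit of `e_j` w.r.t. `B' = (B \ {e}) ∪ {f}` in `M \ e` either is the
fundamental cocircuit `coc(B, e_j)` of `M`, or its union with `{e}` is a cocircuit of `M`. -/
theorem fundCocircuit_delete_cases {α : Type*} (M : Matroid α) [M.Finite]
    (B : Set α) (hB : M.IsBase B) (e f : α) (hef : e ≠ f)
    (hcc : M.IsCocircuit' {e, f}) (heB : e ∈ B) (hfB : f ∉ B)
    (ej : α) (hej : ej ∈ B \ {e}) (D : Set α)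
    (hD : (M.deleteElem e).IsFundCocircuit (insert f (B \ {e})) ej D) :
    M.IsFundCocircuit B ej D ∨ M.IsCocircuit' (insert e D) := by
  obtain ⟨hDcc, hejD, hDsub⟩ := hD
  have hccDep : M✶.Dep {e, f} := hcc.1
  have heE : e ∈ M.E := hccDep.subset_ground (by simp)
  -- {e} is coindependent, so some base avoids e
  have hnd : ¬ M✶.Dep {e} := by
    intro h
    have h2 := hcc.2 h (by simp)
    have : f ∈ ({e} : Set α) := h2 (by simp)
    exact hef (by simpa using this.symm)
  have hindep_e : M✶.Indep {e} := by
    rw [← Matroid.not_dep_iff (by simpa using heE)]; exact hnd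
  obtain ⟨-, B₀, hB₀, hdisj₀⟩ := Matroid.dual_indep_iff_exists'.mp hindep_e
  have he₀ : e ∉ B₀ := fun h => hdisj₀.ne_of_mem rfl h rfl
  -- bases of the deletion are exactly bases of M avoiding e
  have hNbase : ∀ I : Set α, (M.deleteElem e).IsBase I ↔ (M.IsBase I ∧ e ∉ I) := by
    intro I
    rw [Matroid.deleteElem, Matroid.isBase_restrict_iff diff_subset]
    constructor
    · intro hI
      have heI : e ∉ I := fun h => (hI.subset h).2 rfl
      refine ⟨?_, heI⟩
      obtain ⟨B₁, hB₁, hIB₁⟩ := hI.indep.exists_isBase_superset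
      have hIeq : I = B₁ \ {e} :=
        hI.eq_of_subset_indep (hB₁.indep.subset diff_subset)
          (subset_diff_singleton hIB₁ heI) (diff_subset_diff_left hB₁.subset_ground)
      by_cases heB₁ : e ∈ B₁
      · obtain ⟨y, hy, hy2⟩ := hB₁.exchange hB₀ ⟨heB₁, he₀⟩
        exfalso
        have hyE : y ∈ M.E \ {e} := ⟨hB₀.subset_ground hy.1, fun h => he₀ (h ▸ hy.1)⟩
        have hIy : I = insert y (B₁ \ {e}) := by
          refine hI.eq_of_subset_indep hy2.indep ?_ ?_
          · exact hIeq.le.trans (subset_insert _ _)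
          · exact insert_subset hyE (diff_subset_diff_left hB₁.subset_ground)
        have : y ∈ I := hIy ▸ mem_insert y _
        exact hy.2 (hIeq ▸ this).1
      · rwa [hIeq, diff_singleton_eq_self heB₁]
    · rintro ⟨hI, heI⟩
      rw [Matroid.isBasis_iff diff_subset]
      exact ⟨hI.indep, subset_diff_singleton hI.subset_ground heI,
        fun J hJ hIJ _ => hI.eq_of_subset_indep hJ hIJ⟩
  -- D meets every base of M avoiding e, and D ⊆ E \ {e}
  obtain ⟨hmeet, hDE⟩ := Matroid.dual_dep_iff_forall.mp hDcc.1
  have hDE' : D ⊆ M.E \ {e} := hDE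
  have heD : e ∉ D := fun h => (hDE' h).2 rfl
  by_cases hall : ∀ B', M.IsBase B' → (D ∩ B').Nonempty
  · -- D is a cocircuit of M
    left
    refine ⟨⟨Matroid.dual_dep_iff_forall.mpr ⟨hall, hDE'.trans diff_subset⟩, ?_⟩, hejD, ?_⟩
    · intro y hy hysub
      refine hDcc.2 (Matroid.dual_dep_iff_forall.mpr ⟨?_, hysub.trans hDE⟩) hysub
      intro B' hB'
      exact (Matroid.dual_dep_iff_forall.mp hy).1 B' ((hNbase B').mp hB').1
    · refine hDsub.trans (insert_subset_insert ?_)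
      rintro x ⟨⟨hxE, hxe⟩, hx2⟩
      exact ⟨hxE, fun hxB => hx2 (Or.inr ⟨hxB, hxe⟩)⟩
  · -- insert e D is a cocircuit of M
    right
    push_neg at hall
    obtain ⟨B₁, hB₁, hB₁D⟩ := hall
    have hB₁D' : D ∩ B₁ = ∅ := hB₁D
    have hsubE : insert e D ⊆ M.E := insert_subset heE (hDE'.trans diff_subset)
    -- every proper subset of insert e D is coindependent
    have hindep : ∀ x ∈ insert e D, M✶.Indep (insert e D \ {x}) := by
      rintro x (rfl | hxD)
      · rw [insert_diff_self_of_notMem heD]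
        exact Matroid.dual_indep_iff_exists'.mpr ⟨hDE'.trans diff_subset,
          B₁, hB₁, disjoint_iff_inter_eq_empty.mpr hB₁D'⟩
      · have hxe : x ≠ e := fun h => heD (h ▸ hxD)
        have hDx : ¬ (M.deleteElem e)✶.Dep (D \ {x}) := by
          intro h
          exact ((hDcc.2 h diff_subset) hxD).2 rfl
        have hDxi : (M.deleteElem e)✶.Indep (D \ {x}) := by
          rw [← Matroid.not_dep_iff (show D \ {x} ⊆ (M.deleteElem e)✶.E from diff_subset.trans hDE)]
          exact hDx
        obtain ⟨-, Bn, hBn, hdisj⟩ := Matroid.dual_indep_iff_exists'.mp hDxi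
        obtain ⟨hBnM, heBn⟩ := (hNbase Bn).mp hBn
        refine Matroid.dual_indep_iff_exists'.mpr ⟨diff_subset.trans hsubE, Bn, hBnM, ?_⟩
        have hrw : insert e D \ {x} = insert e (D \ {x}) := by
          rw [insert_diff_of_notMem _ (by simpa using hxe.symm)]
        rw [hrw, insert_eq]
        exact ((disjoint_singleton_left.mpr heBn).union_left hdisj).mono_left
          (union_comm _ _ ▸ le_refl _)
    refine ⟨Matroid.dual_dep_iff_forall.mpr ⟨?_, hsubE⟩, ?_⟩
    · intro B' hB'
      by_cases heB' : e ∈ B'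
      · exact ⟨e, mem_insert e D, heB'⟩
      · obtain ⟨z, hz⟩ := hmeet B' ((hNbase B').mpr ⟨hB', heB'⟩)
        exact ⟨z, Or.inr hz.1, hz.2⟩
    · intro y hy hysub
      intro x hx
      by_contra hxy
      exact hy.not_indep ((hindep x hx).subset (subset_diff_singleton hysub hxy))
end
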